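/- Let μ = μ_ac + μ_s be the Lebesgue decomposition of a non-trivial probability measure on ∂B^d with μ_s discrete. Then for every z₀ ∈ B^d, the Christoffel functions agree: λ_∞(z₀; dμ) = λ_∞(z₀; dμ_ac). -/

import Mathlib

open MeasureTheory MvPolynomial Filter

noncomputable section

namespace Stmt10Aux

lemma ip_norm_le {d : ℕ} (ζ w : Fin d → ℂ) :
    ‖∑ j, ζ j * (starRingEnd ℂ) (w j)‖ ≤
      Real.sqrt (∑ j, ‖ζ j‖ ^ 2) * Real.sqrt (∑ j, ‖w j‖ ^ 2) := by
  have h1 : ‖∑ j, ζ j * (starRingEnd ℂ) (w j)‖ ≤ ∑ j, ‖ζ j‖ * ‖w j‖ := by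
    refine (norm_sum_le _ _).trans (Finset.sum_le_sum fun j _ => ?_)
    rw [norm_mul, RCLike.norm_conj]
  refine h1.trans ?_
  have h2 := Finset.sum_mul_sq_le_sq_mul_sq Finset.univ (fun j => ‖ζ j‖) (fun j => ‖w j‖)
  have h3 : (0:ℝ) ≤ ∑ j, ‖ζ j‖ * ‖w j‖ :=
    Finset.sum_nonneg fun j _ => mul_nonneg (norm_nonneg _) (norm_nonneg _)
  calc ∑ j, ‖ζ j‖ * ‖w j‖ = Real.sqrt ((∑ j, ‖ζ j‖ * ‖w j‖) ^ 2) := (Real.sqrt_sq h3).symm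
    _ ≤ Real.sqrt ((∑ j, ‖ζ j‖ ^ 2) * ∑ j, ‖w j‖ ^ 2) := Real.sqrt_le_sqrt h2
    _ = _ := Real.sqrt_mul (by positivity) _

lemma norm_sq_eq_normSq (z : ℂ) : ‖z‖ ^ 2 = Complex.normSq z := by
  rw [Complex.sq_norm]

lemma re_lt_one {d : ℕ} {ζ w : Fin d → ℂ} (hζ : ∑ j, ‖ζ j‖ ^ 2 = 1)
    (hw : ∑ j, ‖w j‖ ^ 2 = 1) (hne : ζ ≠ w) :
    (∑ j, ζ j * (starRingEnd ℂ) (w j)).re < 1 := by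
  have key : ∑ j, ‖ζ j - w j‖ ^ 2
      = 2 - 2 * (∑ j, ζ j * (starRingEnd ℂ) (w j)).re := by
    have hterm : ∀ j, ‖ζ j - w j‖ ^ 2
        = ‖ζ j‖ ^ 2 + ‖w j‖ ^ 2 - 2 * (ζ j * (starRingEnd ℂ) (w j)).re := by
      intro j
      rw [norm_sq_eq_normSq, norm_sq_eq_normSq, norm_sq_eq_normSq, Complex.normSq_sub]
    rw [Complex.re_sum, Finset.mul_sum]
    calc ∑ j, ‖ζ j - w j‖ ^ 2
        = ∑ j, (‖ζ j‖ ^ 2 + ‖w j‖ ^ 2 - 2 * (ζ j * (starRingEnd ℂ) (w j)).re) :=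
          Finset.sum_congr rfl fun j _ => hterm j
      _ = (∑ j, ‖ζ j‖ ^ 2) + (∑ j, ‖w j‖ ^ 2) - ∑ j, 2 * (ζ j * (starRingEnd ℂ) (w j)).re := by
          rw [Finset.sum_sub_distrib, Finset.sum_add_distrib]
      _ = 2 - ∑ j, 2 * (ζ j * (starRingEnd ℂ) (w j)).re := by rw [hζ, hw]; ring
      _ = _ := rfl
  have pos : 0 < ∑ j, ‖ζ j - w j‖ ^ 2 := by
    obtain ⟨j, hj⟩ := Function.ne_iff.1 hne
    refine Finset.sum_pos' (fun i _ => by positivity) ⟨j, Finset.mem_univ j, ?_⟩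
    have h0 : ζ j - w j ≠ 0 := sub_ne_zero.2 hj
    exact pow_pos (norm_pos_iff.2 h0) 2
  linarith

lemma half_le_one {c : ℂ} (h1 : ‖c‖ ≤ 1) : ‖(1 + c) * 2⁻¹‖ ≤ 1 := by
  rw [norm_mul]
  have h2 : ‖(1 + c)‖ ≤ 2 := (norm_add_le _ _).trans (by rw [norm_one]; linarith)
  have h3 : ‖((2:ℂ))⁻¹‖ = 2⁻¹ := by simp
  rw [h3]; nlinarith [norm_nonneg (1 + c)]

lemma half_lt_one {c : ℂ} (h1 : ‖c‖ ≤ 1) (h2 : c.re < 1) : ‖(1 + c) * 2⁻¹‖ < 1 := by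
  have hsq : ‖1 + c‖ ^ 2 = 1 + Complex.normSq c + 2 * c.re := by
    rw [norm_sq_eq_normSq, Complex.normSq_add]
    simp [Complex.normSq_one, Complex.conj_re]
  have hns : Complex.normSq c ≤ 1 := by
    rw [← norm_sq_eq_normSq]; nlinarith [norm_nonneg c]
  have h4 : ‖1 + c‖ ^ 2 < 2 ^ 2 := by rw [hsq]; norm_num; linarith
  have h5 : ‖1 + c‖ < 2 := lt_of_pow_lt_pow_left₀ 2 (by norm_num) h4
  rw [norm_mul]
  have h3 : ‖((2:ℂ))⁻¹‖ = 2⁻¹ := by simp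
  rw [h3]; linarith

lemma ip_self {d : ℕ} {w : Fin d → ℂ} (hw : ∑ j, ‖w j‖ ^ 2 = 1) :
    ∑ j, w j * (starRingEnd ℂ) (w j) = 1 := by
  have h : ∀ j ∈ Finset.univ, w j * (starRingEnd ℂ) (w j) = ((‖w j‖ ^ 2 : ℝ) : ℂ) := by
    intro j _
    rw [Complex.mul_conj, norm_sq_eq_normSq]
  rw [Finset.sum_congr rfl h, ← Complex.ofReal_sum, hw, Complex.ofReal_one]

lemma exists_bound {d : ℕ} (p : MvPolynomial (Fin d) ℂ) :
    ∃ M : ℝ, 0 ≤ M ∧ ∀ ζ, (∑ j, ‖ζ j‖ ^ 2 = 1) → ‖eval ζ p‖ ≤ M := by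
  have hcont : Continuous fun ζ : Fin d → ℂ => ∑ j, ‖ζ j‖ ^ 2 :=
    continuous_finset_sum _ fun j _ => ((continuous_apply j).norm.pow 2)
  have hclosed : IsClosed {ζ : Fin d → ℂ | ∑ j, ‖ζ j‖ ^ 2 = 1} :=
    isClosed_eq hcont continuous_const
  have hsub : {ζ : Fin d → ℂ | ∑ j, ‖ζ j‖ ^ 2 = 1} ⊆ Metric.closedBall 0 1 := by
    intro ζ hζ
    rw [Metric.mem_closedBall, dist_zero_right]
    refine (pi_norm_le_iff_of_nonneg zero_le_one).2 fun j => ?_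
    have h1 : ‖ζ j‖ ^ 2 ≤ 1 := by
      have := Finset.single_le_sum (f := fun i => ‖ζ i‖ ^ 2)
        (fun i _ => by positivity) (Finset.mem_univ j)
      rw [hζ] at this; exact this
    nlinarith [norm_nonneg (ζ j)]
  have hcomp : IsCompact {ζ : Fin d → ℂ | ∑ j, ‖ζ j‖ ^ 2 = 1} :=
    IsCompact.of_isClosed_subset (isCompact_closedBall 0 1) hclosed hsub
  obtain ⟨C, hC⟩ := hcomp.exists_bound_of_continuousOn
    (MvPolynomial.continuous_eval p).continuousOn
  exact ⟨max C 0, le_max_right _ _, fun ζ hζ => (hC ζ hζ).trans (le_max_left _ _)⟩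

lemma exists_tail {α : Type*} [MeasurableSpace α] [MeasurableSingletonClass α]
    (ν : Measure α) [IsFiniteMeasure ν] {t : Set α} (ht : t.Countable) (hν : ν tᶜ = 0)
    {δ : ℝ} (hδ : 0 < δ) :
    ∃ F : Finset α, ↑F ⊆ t ∧ (ν (↑F : Set α)ᶜ).toReal < δ := by
  rcases t.eq_empty_or_nonempty with h | hne
  · refine ⟨∅, by simp, ?_⟩
    have h0 : ν Set.univ = 0 := by
      subst h; simpa using hν
    simpa [h0] using hδ
  · classical
    obtain ⟨f, rfl⟩ := Set.Countable.exists_eq_range ht hne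
    set G : ℕ → Finset α := fun n => (Finset.range (n + 1)).image f with hG
    have hmono : Monotone fun n => (↑(G n) : Set α) := by
      intro m n hmn
      simp only [hG, Finset.coe_image]
      apply Set.image_mono
      intro k hk
      simp only [Finset.coe_range, Set.mem_Iio] at hk ⊢
      omega
    have hunion : (⋃ n, (↑(G n) : Set α)) = Set.range f := by
      ext x
      simp only [Set.mem_iUnion, hG, Finset.coe_image, Set.mem_image, Finset.coe_range,
        Set.mem_Iio, Set.mem_range]
      constructor
      · rintro ⟨n, k, _, rfl⟩; exact ⟨k, rfl⟩
      · rintro ⟨k, rfl⟩; exact ⟨k, k, by omega, rfl⟩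
    have hrange : ν (Set.range f) = ν Set.univ := by
      have h := measure_add_measure_compl (μ := ν) (Set.countable_range f).measurableSet
      rw [hν, add_zero] at h; exact h
    have htend : Tendsto (fun n => ν (↑(G n) : Set α)) atTop (nhds (ν Set.univ)) := by
      have h := tendsto_measure_iUnion_atTop (μ := ν) hmono
      rw [hunion, hrange] at h
      exact h
    have htendR : Tendsto (fun n => (ν (↑(G n) : Set α)).toReal) atTop
        (nhds (ν Set.univ).toReal) :=
      (ENNReal.tendsto_toReal (measure_ne_top ν _)).comp htend
    have hev : ∀ᶠ n in atTop, (ν Set.univ).toReal - δ < (ν (↑(G n) : Set α)).toReal :=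
      htendR.eventually (eventually_gt_nhds (by linarith))
    obtain ⟨n, hn⟩ := hev.exists
    refine ⟨G n, ?_, ?_⟩
    · intro x hx
      simp only [hG, Finset.coe_image, Set.mem_image, Finset.coe_range, Set.mem_Iio] at hx
      obtain ⟨k, _, rfl⟩ := hx
      exact Set.mem_range_self k
    · rw [measure_compl (Finset.measurableSet (G n)) (measure_ne_top _ _),
        ENNReal.toReal_sub_of_le (measure_mono (Set.subset_univ _)) (measure_ne_top _ _)]
      linarith

end Stmt10Aux

theorem stmt10 (d : ℕ) (μ μac μs σ' : Measure (Fin d → ℂ))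
    [IsProbabilityMeasure μ] [IsProbabilityMeasure σ']
    (hsphμ : ∀ᵐ ζ ∂μ, ∑ j, ‖ζ j‖ ^ 2 = 1)
    (hsphσ : ∀ᵐ ζ ∂σ', ∑ j, ‖ζ j‖ ^ 2 = 1)
    (hrot : ∀ U : Matrix.unitaryGroup (Fin d) ℂ,
      Measure.map (fun ζ => Matrix.mulVec (U : Matrix (Fin d) (Fin d) ℂ) ζ) σ' = σ')
    (hnt : ∀ q : MvPolynomial (Fin d) ℂ, q ≠ 0 → 0 < ∫ ζ, ‖eval ζ q‖ ^ 2 ∂μ)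
    (hdecomp : μ = μac + μs)
    (hac : μac ≪ σ')
    (hdisc : ∃ s : Set (Fin d → ℂ), s.Countable ∧ μs sᶜ = 0)
    (z₀ : Fin d → ℂ) (hz₀ : ∑ j, ‖z₀ j‖ ^ 2 < 1) :
    sInf {r : ℝ | ∃ q : MvPolynomial (Fin d) ℂ,
        eval z₀ q = 1 ∧ r = ∫ ζ, ‖eval ζ q‖ ^ 2 ∂μ}
    = sInf {r : ℝ | ∃ q : MvPolynomial (Fin d) ℂ,
        eval z₀ q = 1 ∧ r = ∫ ζ, ‖eval ζ q‖ ^ 2 ∂μac} := by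
  clear hsphσ hrot hnt hac
  obtain ⟨s, hs_count, hs_null⟩ := hdisc
  have hμac_le : μac ≤ μ := by rw [hdecomp]; exact Measure.le_add_right le_rfl
  have hμs_le : μs ≤ μ := by rw [hdecomp]; exact Measure.le_add_left le_rfl
  haveI : IsFiniteMeasure μs := isFiniteMeasure_of_le μ hμs_le
  haveI : IsFiniteMeasure μac := isFiniteMeasure_of_le μ hμac_le
  -- integrability of polynomial squares
  have hint : ∀ p : MvPolynomial (Fin d) ℂ,
      Integrable (fun ζ => ‖eval ζ p‖ ^ 2) μ := by
    intro p
    obtain ⟨M, hM0, hMb⟩ := Stmt10Aux.exists_bound p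
    refine Integrable.mono' (integrable_const (M ^ 2))
      ((MvPolynomial.continuous_eval p).norm.pow 2).aestronglyMeasurable ?_
    filter_upwards [hsphμ] with ζ hζ
    rw [Real.norm_eq_abs, abs_of_nonneg (by positivity)]
    exact pow_le_pow_left₀ (norm_nonneg _) (hMb ζ hζ) 2
  have hintac : ∀ p : MvPolynomial (Fin d) ℂ,
      Integrable (fun ζ => ‖eval ζ p‖ ^ 2) μac := fun p => (hint p).mono_measure hμac_le
  have hints : ∀ p : MvPolynomial (Fin d) ℂ,
      Integrable (fun ζ => ‖eval ζ p‖ ^ 2) μs := fun p => (hint p).mono_measure hμs_le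
  have hbddμ : BddBelow {r : ℝ | ∃ q : MvPolynomial (Fin d) ℂ,
      eval z₀ q = 1 ∧ r = ∫ ζ, ‖eval ζ q‖ ^ 2 ∂μ} := by
    refine ⟨0, ?_⟩; rintro r ⟨q, -, rfl⟩
    exact integral_nonneg fun ζ => by positivity
  have hbddac : BddBelow {r : ℝ | ∃ q : MvPolynomial (Fin d) ℂ,
      eval z₀ q = 1 ∧ r = ∫ ζ, ‖eval ζ q‖ ^ 2 ∂μac} := by
    refine ⟨0, ?_⟩; rintro r ⟨q, -, rfl⟩
    exact integral_nonneg fun ζ => by positivity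
  have hneμ : {r : ℝ | ∃ q : MvPolynomial (Fin d) ℂ,
      eval z₀ q = 1 ∧ r = ∫ ζ, ‖eval ζ q‖ ^ 2 ∂μ}.Nonempty :=
    ⟨_, ⟨1, map_one _, rfl⟩⟩
  have hneac : {r : ℝ | ∃ q : MvPolynomial (Fin d) ℂ,
      eval z₀ q = 1 ∧ r = ∫ ζ, ‖eval ζ q‖ ^ 2 ∂μac}.Nonempty :=
    ⟨_, ⟨1, map_one _, rfl⟩⟩
  refine le_antisymm ?_ ?_
  · -- hard direction
    refine le_csInf hneac ?_
    rintro r ⟨q, hq, rfl⟩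
    set r := ∫ ζ, ‖eval ζ q‖ ^ 2 ∂μac with hrdef
    refine le_of_forall_pos_le_add fun ε hε => ?_
    obtain ⟨M, hM0, hMb⟩ := Stmt10Aux.exists_bound q
    set δ : ℝ := ε / (2 * (M ^ 2 + 1)) with hδdef
    have hδpos : 0 < δ := by positivity
    have hMδ : M ^ 2 * δ < ε := by
      rw [hδdef, mul_div_assoc']
      rw [div_lt_iff₀ (by positivity)]
      nlinarith [sq_nonneg M]
    -- a.e. sphere for μs
    have hsphμs : ∀ᵐ ζ ∂μs, ∑ j, ‖ζ j‖ ^ 2 = 1 := by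
      rw [ae_iff] at hsphμ ⊢
      exact le_antisymm ((Measure.le_iff'.1 hμs_le _).trans_eq hsphμ) zero_le
    -- tail finset
    have hts : μs (s ∩ {ζ : Fin d → ℂ | ∑ j, ‖ζ j‖ ^ 2 = 1})ᶜ = 0 := by
      rw [Set.compl_inter]
      refine measure_union_null hs_null ?_
      rw [ae_iff] at hsphμs
      exact hsphμs
    obtain ⟨F, hFt, hFδ⟩ := Stmt10Aux.exists_tail μs
      (hs_count.mono Set.inter_subset_left) hts hδpos
    have hFsph : ∀ w ∈ F, ∑ j, ‖w j‖ ^ 2 = 1 := fun w hw => (hFt hw).2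
    -- the peak polynomials
    set g : (Fin d → ℂ) → MvPolynomial (Fin d) ℂ :=
      fun w => MvPolynomial.C (2 : ℂ)⁻¹ +
        ∑ j, MvPolynomial.C ((starRingEnd ℂ) (w j) * 2⁻¹) * MvPolynomial.X j with hgdef
    have evg : ∀ w ζ, eval ζ (g w) = (1 + ∑ j, ζ j * (starRingEnd ℂ) (w j)) * 2⁻¹ := by
      intro w ζ
      simp only [hgdef, map_add, map_sum, map_mul, eval_C, eval_X]
      rw [add_mul, one_mul, Finset.sum_mul]
      congr 1
      exact Finset.sum_congr rfl fun j _ => by ring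
    have hg_le : ∀ ζ, (∑ j, ‖ζ j‖ ^ 2 = 1) → ∀ w, (∑ j, ‖w j‖ ^ 2 = 1) →
        ‖eval ζ (g w)‖ ≤ 1 := by
      intro ζ hζ w hw
      rw [evg]
      have h := Stmt10Aux.ip_norm_le ζ w
      rw [hζ, hw, Real.sqrt_one, mul_one] at h
      exact Stmt10Aux.half_le_one h
    have hg_lt : ∀ ζ, (∑ j, ‖ζ j‖ ^ 2 = 1) → ∀ w, (∑ j, ‖w j‖ ^ 2 = 1) → ζ ≠ w →
        ‖eval ζ (g w)‖ < 1 := by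
      intro ζ hζ w hw hne
      rw [evg]
      have h := Stmt10Aux.ip_norm_le ζ w
      rw [hζ, hw, Real.sqrt_one, mul_one] at h
      exact Stmt10Aux.half_lt_one h (Stmt10Aux.re_lt_one hζ hw hne)
    have hg_self : ∀ w, (∑ j, ‖w j‖ ^ 2 = 1) → eval w (g w) = 1 := by
      intro w hw
      rw [evg, Stmt10Aux.ip_self hw]
      norm_num
    have hgz₀ : ∀ w, (∑ j, ‖w j‖ ^ 2 = 1) → ‖eval z₀ (g w)‖ < 1 := by
      intro w hw
      rw [evg]
      have h := Stmt10Aux.ip_norm_le z₀ w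
      rw [hw, Real.sqrt_one, mul_one] at h
      have hsq1 : Real.sqrt (∑ j, ‖z₀ j‖ ^ 2) < 1 := by
        refine (Real.sqrt_lt' one_pos).2 ?_
        simpa using hz₀
      have hlt : ‖∑ j, z₀ j * (starRingEnd ℂ) (w j)‖ < 1 := h.trans_lt hsq1
      refine Stmt10Aux.half_lt_one hlt.le ?_
      calc (∑ j, z₀ j * (starRingEnd ℂ) (w j)).re
          ≤ ‖∑ j, z₀ j * (starRingEnd ℂ) (w j)‖ := Complex.re_le_norm _
        _ < 1 := hlt
    -- the approximating polynomials
    set P : ℕ → MvPolynomial (Fin d) ℂ :=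
      fun n => q * ∏ w ∈ F, (1 - (g w) ^ n) with hPdef
    have evP : ∀ n ζ, eval ζ (P n) = eval ζ q * ∏ w ∈ F, (1 - (eval ζ (g w)) ^ n) := by
      intro n ζ
      rw [hPdef, map_mul, map_prod]
      refine congrArg _ (Finset.prod_congr rfl fun w _ => ?_)
      rw [map_sub, map_one, map_pow]
    set cseq : ℕ → ℂ := fun n => ∏ w ∈ F, (1 - (eval z₀ (g w)) ^ n) with hcdef
    have evPz₀ : ∀ n, eval z₀ (P n) = cseq n := by
      intro n; rw [evP, hq, one_mul]
    have hc : Tendsto cseq atTop (nhds 1) := by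
      have h : Tendsto cseq atTop (nhds (∏ w ∈ F, 1)) := by
        refine tendsto_finset_prod _ fun w hw => ?_
        have := tendsto_const_nhds (X := ℂ) (α := ℕ) (f := atTop) (x := (1:ℂ)) |>.sub
          (tendsto_pow_atTop_nhds_zero_of_norm_lt_one (hgz₀ w (hFsph w hw)))
        simpa using this
      simpa using h
    set H : (Fin d → ℂ) → ℝ :=
      Set.indicator (↑F : Set (Fin d → ℂ))ᶜ (fun ζ => ‖eval ζ q‖ ^ 2) with hHdef
    have hHnn : ∀ ζ, 0 ≤ H ζ := fun ζ =>
      Set.indicator_nonneg (fun x _ => by positivity) ζ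
    have hHle : ∀ ζ, H ζ ≤ ‖eval ζ q‖ ^ 2 := fun ζ =>
      Set.indicator_le_self' (fun x _ => by positivity) ζ
    have hHmeas : StronglyMeasurable H :=
      ((MvPolynomial.continuous_eval q).norm.pow 2).stronglyMeasurable.indicator
        F.measurableSet.compl
    have hHintμ : Integrable H μ := by
      refine (hint q).mono' hHmeas.aestronglyMeasurable ?_
      refine Filter.Eventually.of_forall fun ζ => ?_
      rw [Real.norm_eq_abs, abs_of_nonneg (hHnn ζ)]
      exact hHle ζ
    have hHintac : Integrable H μac := hHintμ.mono_measure hμac_le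
    have hHints : Integrable H μs := hHintμ.mono_measure hμs_le
    -- dominated convergence
    have hBdd : ∀ n, ∀ᵐ ζ ∂μ, ‖‖eval ζ (P n)‖ ^ 2‖ ≤ (M * 2 ^ F.card) ^ 2 := by
      intro n
      filter_upwards [hsphμ] with ζ hζ
      rw [Real.norm_eq_abs, abs_of_nonneg (by positivity)]
      have h1 : ‖eval ζ (P n)‖ ≤ M * 2 ^ F.card := by
        rw [evP, norm_mul]
        have h2 : ‖∏ w ∈ F, (1 - (eval ζ (g w)) ^ n)‖ ≤ 2 ^ F.card := by
          rw [norm_prod]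
          calc ∏ w ∈ F, ‖1 - (eval ζ (g w)) ^ n‖
              ≤ ∏ _w ∈ F, (2:ℝ) := by
                refine Finset.prod_le_prod (fun w _ => norm_nonneg _) fun w hw => ?_
                calc ‖1 - (eval ζ (g w)) ^ n‖ ≤ ‖(1:ℂ)‖ + ‖(eval ζ (g w)) ^ n‖ :=
                      norm_sub_le _ _
                  _ = 1 + ‖eval ζ (g w)‖ ^ n := by rw [norm_one, norm_pow]
                  _ ≤ 1 + 1 := by
                      have := pow_le_one₀ (norm_nonneg _) (hg_le ζ hζ w (hFsph w hw)) (n := n)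
                      linarith
                  _ = 2 := by norm_num
            _ = 2 ^ F.card := Finset.prod_const 2
        exact mul_le_mul (hMb ζ hζ) h2 (norm_nonneg _) hM0
      exact pow_le_pow_left₀ (norm_nonneg _) h1 2
    have hpt : ∀ᵐ ζ ∂μ, Tendsto (fun n => ‖eval ζ (P n)‖ ^ 2) atTop (nhds (H ζ)) := by
      filter_upwards [hsphμ] with ζ hζ
      by_cases hmem : ζ ∈ F
      · have hzero : ∀ n, ‖eval ζ (P n)‖ ^ 2 = 0 := by
          intro n
          rw [evP, Finset.prod_eq_zero hmem (by
            rw [hg_self ζ (hFsph ζ hmem), one_pow, sub_self])]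
          simp
        have hH0 : H ζ = 0 :=
          Set.indicator_of_notMem (by simpa using hmem) _
        rw [hH0]
        simp only [hzero]
        exact tendsto_const_nhds
      · have hHζ : H ζ = ‖eval ζ q‖ ^ 2 :=
          Set.indicator_of_mem (by simpa using hmem) _
        rw [hHζ]
        have hinner : Tendsto (fun n => eval ζ q * ∏ w ∈ F, (1 - (eval ζ (g w)) ^ n))
            atTop (nhds (eval ζ q * ∏ w ∈ F, 1)) := by
          refine tendsto_const_nhds.mul (tendsto_finset_prod _ fun w hw => ?_)
          have hne : ζ ≠ w := fun h => hmem (h ▸ hw)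
          have := tendsto_const_nhds (X := ℂ) (α := ℕ) (f := atTop) (x := (1:ℂ)) |>.sub
            (tendsto_pow_atTop_nhds_zero_of_norm_lt_one (hg_lt ζ hζ w (hFsph w hw) hne))
          simpa using this
        simp only [Finset.prod_const_one, mul_one] at hinner
        have h3 := (hinner.norm.pow 2)
        simp only [← evP] at h3
        exact h3
    have hI : Tendsto (fun n => ∫ ζ, ‖eval ζ (P n)‖ ^ 2 ∂μ) atTop
        (nhds (∫ ζ, H ζ ∂μ)) := by
      refine tendsto_integral_of_dominated_convergence _ ?_ (integrable_const _) hBdd hpt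
      exact fun n => ((MvPolynomial.continuous_eval (P n)).norm.pow 2).aestronglyMeasurable
    -- bound the limit integral
    have hHμ : ∫ ζ, H ζ ∂μ ≤ r + M ^ 2 * δ := by
      rw [hdecomp, integral_add_measure hHintac hHints]
      have hac1 : ∫ ζ, H ζ ∂μac ≤ r := by
        rw [hrdef]
        exact integral_mono hHintac (hintac q) hHle
      have hs1 : ∫ ζ, H ζ ∂μs ≤ M ^ 2 * δ := by
        have h1 : ∫ ζ, H ζ ∂μs ≤
            ∫ ζ, Set.indicator (↑F : Set (Fin d → ℂ))ᶜ (fun _ => M ^ 2) ζ ∂μs := by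
          refine integral_mono_ae hHints
            ((integrable_const (M ^ 2)).indicator F.measurableSet.compl) ?_
          filter_upwards [hsphμs] with ζ hζ
          by_cases hmem : ζ ∈ (↑F : Set (Fin d → ℂ))ᶜ
          · rw [hHdef, Set.indicator_of_mem hmem, Set.indicator_of_mem hmem]
            exact pow_le_pow_left₀ (norm_nonneg _) (hMb ζ hζ) 2
          · rw [hHdef, Set.indicator_of_notMem hmem, Set.indicator_of_notMem hmem]
        rw [integral_indicator_const _ F.measurableSet.compl, smul_eq_mul] at h1
        refine h1.trans ?_
        calc (μs (↑F : Set (Fin d → ℂ))ᶜ).toReal * M ^ 2 ≤ δ * M ^ 2 :=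
              mul_le_mul_of_nonneg_right hFδ.le (by positivity)
          _ = M ^ 2 * δ := mul_comm _ _
      linarith
    -- put it together
    have ha : Tendsto (fun n => ‖(cseq n)⁻¹‖ ^ 2 * ∫ ζ, ‖eval ζ (P n)‖ ^ 2 ∂μ) atTop
        (nhds (‖((1:ℂ))⁻¹‖ ^ 2 * ∫ ζ, H ζ ∂μ)) :=
      (((hc.inv₀ one_ne_zero).norm.pow 2).mul hI)
    simp only [inv_one, norm_one, one_pow, one_mul] at ha
    have hlim_lt : ∫ ζ, H ζ ∂μ < r + ε := lt_of_le_of_lt hHμ (by linarith)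
    obtain ⟨n, hn1, hn2⟩ :=
      ((ha.eventually_lt_const hlim_lt).and (hc.eventually_ne one_ne_zero)).exists
    set Q : MvPolynomial (Fin d) ℂ := MvPolynomial.C (cseq n)⁻¹ * P n with hQdef
    have hQ1 : eval z₀ Q = 1 := by
      rw [hQdef, map_mul, eval_C, evPz₀]
      exact inv_mul_cancel₀ hn2
    have hQint : ∫ ζ, ‖eval ζ Q‖ ^ 2 ∂μ
        = ‖(cseq n)⁻¹‖ ^ 2 * ∫ ζ, ‖eval ζ (P n)‖ ^ 2 ∂μ := by
      have hev : ∀ ζ, ‖eval ζ Q‖ ^ 2 = ‖(cseq n)⁻¹‖ ^ 2 * ‖eval ζ (P n)‖ ^ 2 := by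
        intro ζ
        rw [hQdef, map_mul, eval_C, norm_mul, mul_pow]
      simp only [hev]
      exact integral_const_mul _ _
    calc sInf {r : ℝ | ∃ q : MvPolynomial (Fin d) ℂ,
            eval z₀ q = 1 ∧ r = ∫ ζ, ‖eval ζ q‖ ^ 2 ∂μ}
        ≤ ∫ ζ, ‖eval ζ Q‖ ^ 2 ∂μ := csInf_le hbddμ ⟨Q, hQ1, rfl⟩
      _ = ‖(cseq n)⁻¹‖ ^ 2 * ∫ ζ, ‖eval ζ (P n)‖ ^ 2 ∂μ := hQint
      _ ≤ r + ε := hn1.le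
  · -- easy direction
    refine le_csInf hneμ ?_
    rintro r ⟨q, hq, rfl⟩
    refine (csInf_le hbddac ⟨q, hq, rfl⟩).trans ?_
    exact integral_mono_measure hμac_le
      (Filter.Eventually.of_forall fun ζ => by positivity) (hint q)

end
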